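/- Let n ∈ ℕ, let g₁,…,g_m be polynomials in n real variables such that Ω = {x ∈ ℝⁿ : g_j(x) ≥ 0, j = 1,…,m} is compact with nonempty interior and the quadratic module generated by g₁,…,g_m is Archimedean. Let λ be a finite Borel measure supported on Ω with λ(O) > 0 for some open set O ⊆ Ω, and let u ∈ L²(Ω,λ) with u ≥ 0 λ-almost everywhere. Set d_j = ⌈deg(g_j)/2⌉, and for each d ≥ max_j d_j let G_d be the set of polynomials p of degree at most d of the form p = σ₀ + Σ_{j=1}^m σ_j g_j with σ₀ a sum of squares of degree at most 2d and each σ_j a sum of squares of degree at most 2(d − d_j); let u*_d be a minimizer of ∫_Ω (u − p)² dλ over G_d. Then every u*_d is nonnegative on Ω and ‖u − u*_d‖_{L²(Ω,λ)} → 0 as d → ∞. -/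

import Mathlib

open MeasureTheory Matrix Finset Filter
open scoped ENNReal NNReal

noncomputable section

/-- The set of multi-indices `α : Fin n → ℕ` with `|α| = ∑ i, α i ≤ d`, as a `Finset`. -/
def multiIdx (n d : ℕ) : Finset (Fin n → ℕ) :=
  (Fintype.piFinset fun _ : Fin n => Finset.range (d + 1)).filter fun α => ∑ i, α i ≤ d

/-- The monomial `x^α = ∏ i, x i ^ α i`. -/
def mono {n : ℕ} (α : Fin n → ℕ) (x : Fin n → ℝ) : ℝ := ∏ i, x i ^ α i

/-- `f` is (the function given by) a polynomial of degree at most `k`. -/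
def PolyLe (n k : ℕ) (f : (Fin n → ℝ) → ℝ) : Prop :=
  ∃ c : ↥(multiIdx n k) → ℝ, f = fun x => ∑ α : ↥(multiIdx n k), c α * mono (↑α) x

/-- `σ` is a sum of squares of polynomials of degree at most `k`
(so `σ` itself has degree at most `2k`). -/
def IsSOSLe (n k : ℕ) (σ : (Fin n → ℝ) → ℝ) : Prop :=
  ∃ (N : ℕ) (q : Fin N → (Fin n → ℝ) → ℝ),
    (∀ i, PolyLe n k (q i)) ∧ σ = fun x => ∑ i, q i x ^ 2

/-- `σ` is a sum of squares of polynomials (of arbitrary degree). -/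
def IsSOS (n : ℕ) (σ : (Fin n → ℝ) → ℝ) : Prop := ∃ k, IsSOSLe n k σ

/-- `d_j = ⌈deg(g_j)/2⌉`. -/
def ceilHalfDeg {n : ℕ} (g : MvPolynomial (Fin n) ℝ) : ℕ := (g.totalDegree + 1) / 2

/-- Membership in the quadratic module generated by `g₁,…,g_m`:
`f = σ₀ + Σ_j σ_j g_j` with all `σ_j` SOS. -/
def InQuadraticModule {n m : ℕ} (g : Fin m → MvPolynomial (Fin n) ℝ)
    (f : (Fin n → ℝ) → ℝ) : Prop :=
  ∃ (σ₀ : (Fin n → ℝ) → ℝ) (σ : Fin m → (Fin n → ℝ) → ℝ),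
    IsSOS n σ₀ ∧ (∀ j, IsSOS n (σ j)) ∧
    ∀ x, f x = σ₀ x + ∑ j, σ j x * MvPolynomial.eval x (g j)

/-- Membership in `G_d`: `p = σ₀ + Σ_j σ_j g_j` with `σ₀` an SOS of degree at most `2d`
and each `σ_j` an SOS of degree at most `2(d - d_j)`. -/
def PutinarRep {n m : ℕ} (g : Fin m → MvPolynomial (Fin n) ℝ) (d : ℕ)
    (p : (Fin n → ℝ) → ℝ) : Prop :=
  ∃ (σ₀ : (Fin n → ℝ) → ℝ) (σ : Fin m → (Fin n → ℝ) → ℝ),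
    IsSOSLe n d σ₀ ∧ (∀ j, IsSOSLe n (d - ceilHalfDeg (g j)) (σ j)) ∧
    ∀ x, p x = σ₀ x + ∑ j, σ j x * MvPolynomial.eval x (g j)

theorem polyLe_eval {n k : ℕ} (P : MvPolynomial (Fin n) ℝ) (h : P.totalDegree ≤ k) :
    PolyLe n k (fun x => MvPolynomial.eval x P) := by
  classical
  refine ⟨fun α => P.coeff (Finsupp.equivFunOnFinite.symm (↑α)), ?_⟩
  funext x
  rw [Finset.sum_coe_sort (multiIdx n k)
    (fun α => P.coeff (Finsupp.equivFunOnFinite.symm α) * mono α x)]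
  have himg : P.support ⊆ (multiIdx n k).image (fun α => Finsupp.equivFunOnFinite.symm α) := by
    intro β hβ
    simp only [Finset.mem_image]
    refine ⟨Finsupp.equivFunOnFinite β, ?_, by simp⟩
    have hs : (∑ i, β i) ≤ k := by
      have := MvPolynomial.le_totalDegree (p := P) hβ
      have hsum : β.sum (fun _ e => e) = ∑ i, β i := Finsupp.sum_fintype _ _ (fun _ => rfl)
      omega
    simp only [multiIdx, Finset.mem_filter, Fintype.mem_piFinset, Finset.mem_range,
      Finsupp.equivFunOnFinite_apply]
    refine ⟨fun i => ?_, hs⟩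
    have : β i ≤ ∑ j, β j := Finset.single_le_sum (fun j _ => Nat.zero_le _) (Finset.mem_univ i)
    omega
  have h1 : (MvPolynomial.eval x) P
      = ∑ β ∈ (multiIdx n k).image (fun α => Finsupp.equivFunOnFinite.symm α),
          P.coeff β * ∏ i, x i ^ β i := by
    rw [MvPolynomial.eval_eq']
    exact Finset.sum_subset himg (fun β _ hβ => by
      rw [MvPolynomial.notMem_support_iff.mp hβ, zero_mul])
  have h2 : (∑ β ∈ (multiIdx n k).image (fun α => Finsupp.equivFunOnFinite.symm α),
        P.coeff β * ∏ i, x i ^ β i)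
      = ∑ α ∈ multiIdx n k,
          P.coeff (Finsupp.equivFunOnFinite.symm α) * ∏ i, x i ^ (Finsupp.equivFunOnFinite.symm α) i :=
    Finset.sum_image (fun a _ b _ hab => Finsupp.equivFunOnFinite.symm.injective hab)
  rw [h1, h2]
  rfl

theorem PolyLe.continuous {n k : ℕ} {f : (Fin n → ℝ) → ℝ} (h : PolyLe n k f) : Continuous f := by
  obtain ⟨c, rfl⟩ := h
  refine continuous_finset_sum _ fun α _ => Continuous.mul continuous_const ?_
  exact continuous_finset_prod _ fun i _ => (continuous_apply i).pow _






theorem IsSOSLe.nonneg {n k : ℕ} {σ : (Fin n → ℝ) → ℝ} (h : IsSOSLe n k σ) (x : Fin n → ℝ) :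
    0 ≤ σ x := by
  obtain ⟨N, q, -, rfl⟩ := h
  exact Finset.sum_nonneg fun i _ => sq_nonneg _

/-- The square of a polynomial of degree ≤ d is a `PutinarRep` at level `d`. -/
theorem putinarRep_sq {n m : ℕ} (g : Fin m → MvPolynomial (Fin n) ℝ) (d : ℕ)
    (P : MvPolynomial (Fin n) ℝ) (hP : P.totalDegree ≤ d) :
    PutinarRep g d (fun x => (MvPolynomial.eval x P) ^ 2) := by
  refine ⟨fun x => (MvPolynomial.eval x P) ^ 2, fun _ _ => 0, ?_, ?_, ?_⟩
  · exact ⟨1, fun _ => fun x => MvPolynomial.eval x P,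
      fun _ => polyLe_eval P hP, by funext x; simp⟩
  · intro j
    exact ⟨0, Fin.elim0, fun i => i.elim0, by funext x; simp⟩
  · intro x; simp

/-- MemLp for continuous functions w.r.t. a finite measure restricted to a compact set. -/
theorem memL2_of_continuous {n : ℕ} {Ω : Set (Fin n → ℝ)} (hΩ : IsCompact Ω)
    (μ : Measure (Fin n → ℝ)) [IsFiniteMeasure μ] {f : (Fin n → ℝ) → ℝ}
    (hf : Continuous f) : MemLp f 2 (μ.restrict Ω) := by
  obtain ⟨C, hC⟩ := hΩ.exists_bound_of_continuousOn hf.continuousOn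
  refine MemLp.of_bound hf.aestronglyMeasurable C ?_
  filter_upwards [ae_restrict_mem hΩ.isClosed.measurableSet] with x hx
  exact hC x hx

/-- Comparing L² norms via integrals of squares. -/
theorem key_comparison {α : Type*} [MeasurableSpace α] {ν : Measure α}
    {f h : α → ℝ} (hf : MemLp f 2 ν) (hh : MemLp h 2 ν)
    (hint : ∫ x, f x ^ 2 ∂ν ≤ ∫ x, h x ^ 2 ∂ν) :
    eLpNorm f 2 ν ≤ eLpNorm h 2 ν := by
  rw [hf.eLpNorm_eq_integral_rpow_norm two_ne_zero ENNReal.ofNat_ne_top,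
      hh.eLpNorm_eq_integral_rpow_norm two_ne_zero ENNReal.ofNat_ne_top]
  apply ENNReal.ofReal_le_ofReal
  have e1 : ∀ (u : α → ℝ) (a : α), ‖u a‖ ^ (2 : ℝ≥0∞).toReal = u a ^ 2 := by
    intro u a
    rw [ENNReal.toReal_ofNat, show ((2:ℝ) = ((2:ℕ):ℝ)) by norm_num, Real.rpow_natCast, Real.norm_eq_abs, sq_abs]
  apply Real.rpow_le_rpow (by positivity) _ (by positivity)
  simp only [e1]
  exact hint

theorem approx_sq {n : ℕ} {Ω : Set (Fin n → ℝ)} (hΩ : IsCompact Ω)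
    (μ : Measure (Fin n → ℝ)) [IsFiniteMeasure μ]
    {u : (Fin n → ℝ) → ℝ} (hu : MemLp u 2 (μ.restrict Ω))
    (hupos : ∀ᵐ x ∂(μ.restrict Ω), 0 ≤ u x)
    {ε : ℝ≥0∞} (hε : ε ≠ 0) :
    ∃ P : MvPolynomial (Fin n) ℝ,
      eLpNorm (fun x => u x - (MvPolynomial.eval x P) ^ 2) 2 (μ.restrict Ω) ≤ ε := by
  classical
  haveI : CompactSpace ↥Ω := isCompact_iff_compactSpace.mp hΩ
  set ν := μ.restrict Ω with hν
  have hε2 : ε / 2 ≠ 0 := by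
    simp [ENNReal.div_eq_zero_iff, hε]
  obtain ⟨hb, hb_le, -⟩ := hu.exists_boundedContinuous_eLpNorm_sub_le ENNReal.ofNat_ne_top hε2
  set h1 : (Fin n → ℝ) → ℝ := fun x => max (hb x) 0 with hh1
  have h1cont : Continuous h1 := hb.continuous.max continuous_const
  have step1 : eLpNorm (fun x => u x - h1 x) 2 ν ≤ ε / 2 := by
    refine le_trans (eLpNorm_mono_ae ?_) hb_le
    filter_upwards [hupos] with x hx
    simp only [Real.norm_eq_abs, Pi.sub_apply, hh1]
    rcases le_or_gt 0 (hb x) with hbx | hbx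
    · rw [max_eq_left hbx]
    · rw [max_eq_right hbx.le, sub_zero, abs_of_nonneg hx]
      calc u x ≤ u x - hb x := by linarith
      _ ≤ |u x - hb x| := le_abs_self _
  set φ : (Fin n → ℝ) → ℝ := fun x => Real.sqrt (h1 x) with hφ
  have φcont : Continuous φ := Real.continuous_sqrt.comp h1cont
  obtain ⟨M0, hM0⟩ := hΩ.exists_bound_of_continuousOn φcont.continuousOn
  set M : ℝ := max M0 1 with hM
  have hM1 : (1:ℝ) ≤ M := le_max_right _ _
  set K : ℝ≥0∞ := ν Set.univ ^ ((2:ℝ≥0∞).toReal)⁻¹ with hK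
  have hKne : K ≠ ⊤ :=
    ENNReal.rpow_ne_top_of_nonneg (by positivity) (measure_ne_top ν _)
  set c : ℝ := K.toReal + 1 with hc
  have hcpos : 0 < c := by positivity
  have hKc : K ≤ ENNReal.ofReal c := by
    rw [← ENNReal.ofReal_toReal hKne]
    exact ENNReal.ofReal_le_ofReal (by simp [hc])
  set Em : ℝ≥0∞ := min (ε / 2) 1 with hEm
  have hEm0 : Em ≠ 0 :=
    (lt_min (pos_iff_ne_zero.mpr hε2) one_pos).ne'
  have hEmtop : Em ≠ ⊤ := by
    simp [hEm]
  set e₀ : ℝ := Em.toReal with he₀def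
  have he₀ : 0 < e₀ := ENNReal.toReal_pos hEm0 hEmtop
  set δ : ℝ := min (e₀ / ((2 * M + 1) * c)) 1 with hδdef
  have hδpos : 0 < δ := by
    apply lt_min _ one_pos
    apply div_pos he₀
    positivity
  have hδ1 : δ ≤ 1 := min_le_right _ _
  have hδe : δ * ((2 * M + 1) * c) ≤ e₀ := by
    have h2 : (0:ℝ) < (2 * M + 1) * c := by positivity
    calc δ * ((2 * M + 1) * c) ≤ (e₀ / ((2 * M + 1) * c)) * ((2 * M + 1) * c) := by
          apply mul_le_mul_of_nonneg_right (min_le_left _ _) h2.le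
    _ = e₀ := div_mul_cancel₀ _ h2.ne'
  -- Stone–Weierstrass
  set coord : Fin n → C(↥Ω, ℝ) :=
    fun i => ⟨fun x => (x : Fin n → ℝ) i, (continuous_apply i).comp continuous_subtype_val⟩
    with hcoord
  set EA : MvPolynomial (Fin n) ℝ →ₐ[ℝ] C(↥Ω, ℝ) := MvPolynomial.aeval coord with hEA
  have hEAeval : ∀ (P : MvPolynomial (Fin n) ℝ) (x : ↥Ω),
      EA P x = MvPolynomial.eval (↑x) P := by
    intro P x
    induction P using MvPolynomial.induction_on with
    | C a => simp [hEA]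
    | add p q hp hq => simp [_root_.map_add, ContinuousMap.add_apply, hp, hq]
    | mul_X p i hp => simp [_root_.map_mul, ContinuousMap.mul_apply, hp, hEA, hcoord]; exact Or.inl hp
  have sep : (EA.range).SeparatesPoints := by
    intro x y hxy
    have hex : ∃ i, (x : Fin n → ℝ) i ≠ (y : Fin n → ℝ) i := by
      by_contra hcon; push_neg at hcon
      exact hxy (Subtype.ext (funext hcon))
    obtain ⟨i, hi⟩ := hex
    refine ⟨⇑(EA (MvPolynomial.X i)), ⟨EA (MvPolynomial.X i), ⟨MvPolynomial.X i, rfl⟩, rfl⟩, ?_⟩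
    simpa [hEAeval] using hi
  obtain ⟨g, hg⟩ := ContinuousMap.exists_mem_subalgebra_near_continuous_of_separatesPoints
    EA.range sep (fun x : ↥Ω => φ ↑x) (φcont.comp continuous_subtype_val) δ hδpos
  obtain ⟨P, hP⟩ := g.2
  refine ⟨P, ?_⟩
  have hPapprox : ∀ x ∈ Ω, |MvPolynomial.eval x P - φ x| < δ := by
    intro x hx
    have := hg ⟨x, hx⟩
    rw [← hP] at this
    simpa [hEAeval, Real.norm_eq_abs] using this
  -- pointwise bound
  have hbound : ∀ x ∈ Ω, ‖h1 x - (MvPolynomial.eval x P) ^ 2‖ ≤ δ * (2 * M + 1) := by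
    intro x hx
    have hφsq : φ x ^ 2 = h1 x := Real.sq_sqrt (le_max_right _ _)
    have haM : |φ x| ≤ M := le_trans (hM0 x hx) (le_max_left _ _)
    have hbM : |MvPolynomial.eval x P| ≤ M + δ := by
      calc |MvPolynomial.eval x P| ≤ |MvPolynomial.eval x P - φ x| + |φ x| := by
            simpa using abs_add_le (MvPolynomial.eval x P - φ x) (φ x)
      _ ≤ δ + M := add_le_add (hPapprox x hx).le haM
      _ = M + δ := by ring
    rw [Real.norm_eq_abs, ← hφsq, sq_sub_sq, abs_mul]
    have h1' : |φ x + MvPolynomial.eval x P| ≤ 2 * M + 1 := by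
      calc |φ x + MvPolynomial.eval x P| ≤ |φ x| + |MvPolynomial.eval x P| := abs_add_le _ _
      _ ≤ M + (M + δ) := add_le_add haM hbM
      _ ≤ 2 * M + 1 := by linarith
    have h2' : |φ x - MvPolynomial.eval x P| ≤ δ := by
      rw [abs_sub_comm]; exact (hPapprox x hx).le
    calc |φ x + MvPolynomial.eval x P| * |φ x - MvPolynomial.eval x P|
        ≤ (2 * M + 1) * δ := by
          apply mul_le_mul h1' h2' (abs_nonneg _) (by positivity)
    _ = δ * (2 * M + 1) := by ring
  have step2 : eLpNorm (fun x => h1 x - (MvPolynomial.eval x P) ^ 2) 2 ν ≤ Em := by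
    have hae : ∀ᵐ x ∂ν, ‖h1 x - (MvPolynomial.eval x P) ^ 2‖ ≤ δ * (2 * M + 1) := by
      filter_upwards [ae_restrict_mem hΩ.isClosed.measurableSet] with x hx
      exact hbound x hx
    refine le_trans (eLpNorm_le_of_ae_bound hae) ?_
    calc K * ENNReal.ofReal (δ * (2 * M + 1))
        ≤ ENNReal.ofReal c * ENNReal.ofReal (δ * (2 * M + 1)) := by
          exact mul_le_mul_left hKc _
    _ = ENNReal.ofReal (c * (δ * (2 * M + 1))) := (ENNReal.ofReal_mul hcpos.le).symm
    _ ≤ ENNReal.ofReal e₀ := by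
          apply ENNReal.ofReal_le_ofReal
          calc c * (δ * (2 * M + 1)) = δ * ((2 * M + 1) * c) := by ring
          _ ≤ e₀ := hδe
    _ = Em := by rw [he₀def, ENNReal.ofReal_toReal hEmtop]
  -- combine
  have hsplit : (fun x => u x - (MvPolynomial.eval x P) ^ 2)
      = (fun x => u x - h1 x) + (fun x => h1 x - (MvPolynomial.eval x P) ^ 2) := by
    funext x; simp
  have hmeas1 : AEStronglyMeasurable (fun x => u x - h1 x) ν :=
    hu.aestronglyMeasurable.sub h1cont.aestronglyMeasurable
  have hmeas2 : AEStronglyMeasurable (fun x => h1 x - (MvPolynomial.eval x P) ^ 2) ν :=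
    (h1cont.sub ((MvPolynomial.continuous_eval (p := P)).pow 2)).aestronglyMeasurable
  calc eLpNorm (fun x => u x - (MvPolynomial.eval x P) ^ 2) 2 ν
      ≤ eLpNorm (fun x => u x - h1 x) 2 ν
        + eLpNorm (fun x => h1 x - (MvPolynomial.eval x P) ^ 2) 2 ν := by
        rw [hsplit]
        exact eLpNorm_add_le hmeas1 hmeas2 one_le_two
  _ ≤ ε / 2 + Em := add_le_add step1 step2
  _ ≤ ε / 2 + ε / 2 := add_le_add_right (min_le_left _ _) _
  _ = ε := ENNReal.add_halves ε


/-- for `Ω = {x : g_j(x) ≥ 0}` compact with nonempty interior and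
Archimedean quadratic module, if for each `d ≥ max_j d_j` the polynomial `U d` of degree
at most `d` minimizes `∫_Ω (u - p)² dλ` over the set `G_d` of polynomials of degree at
most `d` with a Putinar representation, then every such `U d` is nonnegative on `Ω` and
`‖u - U d‖_{L²(Ω,λ)} → 0` as `d → ∞`. -/
theorem stmt12 (n m : ℕ) (g : Fin m → MvPolynomial (Fin n) ℝ)
    (Ω : Set (Fin n → ℝ)) (hΩdef : Ω = {x | ∀ j, 0 ≤ MvPolynomial.eval x (g j)})
    (hΩ : IsCompact Ω) (hΩint : (interior Ω).Nonempty)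
    (harch : ∃ N : ℝ, 0 < N ∧
      InQuadraticModule g (fun x => N - ∑ i, x i ^ 2))
    (μ : Measure (Fin n → ℝ)) [IsFiniteMeasure μ] (hsupp : μ Ωᶜ = 0)
    (O : Set (Fin n → ℝ)) (hO : IsOpen O) (hOΩ : O ⊆ Ω) (hOpos : 0 < μ O)
    (u : (Fin n → ℝ) → ℝ) (hu : MemLp u 2 (μ.restrict Ω))
    (hupos : ∀ᵐ x ∂(μ.restrict Ω), 0 ≤ u x)
    (U : ℕ → (Fin n → ℝ) → ℝ)
    (hU : ∀ d, (∀ j, ceilHalfDeg (g j) ≤ d) →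
      PolyLe n d (U d) ∧ PutinarRep g d (U d) ∧
      ∀ p : (Fin n → ℝ) → ℝ, PolyLe n d p → PutinarRep g d p →
        ∫ x in Ω, (u x - U d x) ^ 2 ∂μ ≤ ∫ x in Ω, (u x - p x) ^ 2 ∂μ) :
    (∀ d, (∀ j, ceilHalfDeg (g j) ≤ d) → ∀ x ∈ Ω, 0 ≤ U d x) ∧
    Tendsto (fun d => eLpNorm (fun x => u x - U d x) 2 (μ.restrict Ω)) atTop (nhds 0) := by
  classical
  constructor
  · -- nonnegativity
    intro d hd x hx
    obtain ⟨σ₀, σ, h0, hj, hrep⟩ := (hU d hd).2.1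
    rw [hrep x]
    refine add_nonneg (h0.nonneg x) (Finset.sum_nonneg fun j _ => mul_nonneg ((hj j).nonneg x) ?_)
    rw [hΩdef] at hx
    exact hx j
  · -- convergence
    rw [ENNReal.tendsto_nhds_zero]
    intro ε hε
    obtain ⟨P, hPa⟩ := approx_sq hΩ μ hu hupos hε.ne'
    set q2 : (Fin n → ℝ) → ℝ := fun x => (MvPolynomial.eval x P) ^ 2 with hq2
    have hq2eval : q2 = fun x => MvPolynomial.eval x (P * P) := by
      funext x; simp [hq2, sq]
    filter_upwards [eventually_ge_atTop (max ((P * P).totalDegree) (max P.totalDegree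
      (Finset.univ.sup fun j => ceilHalfDeg (g j))))] with d hdD
    have hA : (P * P).totalDegree ≤ d := le_trans (le_max_left _ _) hdD
    have hB : P.totalDegree ≤ d := le_trans (le_trans (le_max_left _ _) (le_max_right _ _)) hdD
    have hC : (Finset.univ.sup fun j => ceilHalfDeg (g j)) ≤ d :=
      le_trans (le_trans (le_max_right _ _) (le_max_right _ _)) hdD
    have hd : ∀ j, ceilHalfDeg (g j) ≤ d := fun j =>
      le_trans (Finset.le_sup (f := fun j => ceilHalfDeg (g j)) (Finset.mem_univ j)) hC
    obtain ⟨hUpoly, hUrep, hmin⟩ := hU d hd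
    have hq2poly : PolyLe n d q2 := by
      rw [hq2eval]
      exact polyLe_eval _ hA
    have hq2rep : PutinarRep g d q2 := putinarRep_sq g d P hB
    have hint := hmin q2 hq2poly hq2rep
    have mUd : MemLp (U d) 2 (μ.restrict Ω) := memL2_of_continuous hΩ μ hUpoly.continuous
    have mq2 : MemLp q2 2 (μ.restrict Ω) := memL2_of_continuous hΩ μ
      (by rw [hq2eval]; exact (MvPolynomial.continuous_eval (p := P * P)))
    calc eLpNorm (fun x => u x - U d x) 2 (μ.restrict Ω)
        ≤ eLpNorm (fun x => u x - q2 x) 2 (μ.restrict Ω) :=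
          key_comparison (hu.sub mUd) (hu.sub mq2) hint
    _ ≤ ε := hPa
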